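/- In the setting of an exact sequence 0 → M' → M → M'' → 0 of quadratically normed free ℤ-modules (subspace norm on M', quotient norm on M''), one has χ(M) ≤ χ(M') + χ(M''). -/

import Mathlib

open MeasureTheory Module

/-- The volume of the unit ball in the Euclidean space `ℝ^r`. -/
noncomputable def unitBallVol (r : ℕ) : ℝ :=
  (volume (Metric.ball (0 : EuclideanSpace ℝ (Fin r)) 1)).toReal

/-- Subadditivity of the arithmetic volume `χ` in an exact sequence
`0 → M' → M → M'' → 0` of quadratically normed lattices, where `M'` carries the subspace
inner product (encoded by the isometric embedding `f`) and `M''` the quotient inner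
product (encoded by the surjection `g` isometric on the orthogonal complement of its
kernel): `χ(M) ≤ χ(M') + χ(M'')`. -/

lemma volume_fundamentalDomain_orthonormalBasis {ι F : Type*} [Fintype ι]
    [NormedAddCommGroup F] [InnerProductSpace ℝ F] [FiniteDimensional ℝ F]
    [MeasurableSpace F] [BorelSpace F] (b : OrthonormalBasis ι ℝ F) :
    volume (ZSpan.fundamentalDomain b.toBasis) = 1 := by
  rw [measure_congr (ZSpan.fundamentalDomain_ae_parallelepiped b.toBasis volume)]
  have := b.volume_parallelepiped
  rwa [← b.coe_toBasis] at this

lemma covolume_eq_abs_det {ι F : Type*} [Fintype ι] [DecidableEq ι]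
    [NormedAddCommGroup F] [InnerProductSpace ℝ F] [FiniteDimensional ℝ F]
    [MeasurableSpace F] [BorelSpace F]
    (L : Submodule ℤ F) [DiscreteTopology L] [IsZLattice ℝ L]
    (b : Basis ι ℤ L) (b₀ : OrthonormalBasis ι ℝ F) :
    ZLattice.covolume L = |b₀.toBasis.det ((↑) ∘ ⇑b)| := by
  rw [ZLattice.covolume_eq_det_mul_measureReal L volume b b₀.toBasis, measureReal_def,
    volume_fundamentalDomain_orthonormalBasis b₀, ENNReal.toReal_one, mul_one]

lemma vol_ball_le_mul {ι κ : Type*} [Fintype ι] [Fintype κ]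
    {E' E E'' : Type*}
    [NormedAddCommGroup E'] [InnerProductSpace ℝ E'] [FiniteDimensional ℝ E']
    [MeasurableSpace E'] [BorelSpace E']
    [NormedAddCommGroup E] [InnerProductSpace ℝ E] [FiniteDimensional ℝ E]
    [MeasurableSpace E] [BorelSpace E]
    [NormedAddCommGroup E''] [InnerProductSpace ℝ E''] [FiniteDimensional ℝ E'']
    [MeasurableSpace E''] [BorelSpace E'']
    (b₀ : OrthonormalBasis (ι ⊕ κ) ℝ E) (b' : OrthonormalBasis ι ℝ E')
    (b'' : OrthonormalBasis κ ℝ E'') :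
    (volume (Metric.ball (0 : E) 1)).toReal
      ≤ (volume (Metric.ball (0 : E') 1)).toReal
        * (volume (Metric.ball (0 : E'') 1)).toReal := by
  classical
  set Φ : E → E' × E'' := fun x =>
    (b'.repr.symm ((WithLp.equiv 2 _).symm fun i => b₀.repr x (Sum.inl i)),
     b''.repr.symm ((WithLp.equiv 2 _).symm fun j => b₀.repr x (Sum.inr j))) with hΦdef
  have hmp : MeasurePreserving Φ volume ((volume : Measure E').prod volume) := by
    have h1 := b₀.measurePreserving_repr
    have h2 := EuclideanSpace.volume_preserving_symm_measurableEquiv_toLp (ι ⊕ κ)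
    have h3 := volume_measurePreserving_sumPiEquivProdPi (fun _ : ι ⊕ κ => ℝ)
    have h4 := ((EuclideanSpace.volume_preserving_symm_measurableEquiv_toLp ι).symm).prod
      ((EuclideanSpace.volume_preserving_symm_measurableEquiv_toLp κ).symm)
    have h5 := (b'.measurePreserving_repr_symm).prod (b''.measurePreserving_repr_symm)
    have hcomp := h5.comp (h4.comp (h3.comp (h2.comp h1)))
    convert hcomp using 1
    rfl
  have hsub : Metric.ball (0 : E) 1 ⊆ Φ ⁻¹' (Metric.ball 0 1 ×ˢ Metric.ball 0 1) := by
    intro x hx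
    simp only [Metric.mem_ball, dist_zero_right] at hx
    have hx' : ‖b₀.repr x‖ < 1 := by rwa [b₀.repr.norm_map]
    constructor
    · simp only [Metric.mem_ball, dist_zero_right, hΦdef]
      rw [LinearIsometryEquiv.norm_map]
      refine lt_of_le_of_lt ?_ hx'
      rw [EuclideanSpace.norm_eq, EuclideanSpace.norm_eq]
      apply Real.sqrt_le_sqrt
      rw [Fintype.sum_sum_type]
      simp only [WithLp.equiv_symm_apply, PiLp.toLp_apply]
      exact le_add_of_nonneg_right (Finset.sum_nonneg fun _ _ => by positivity)
    · simp only [Metric.mem_ball, dist_zero_right, hΦdef]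
      rw [LinearIsometryEquiv.norm_map]
      refine lt_of_le_of_lt ?_ hx'
      rw [EuclideanSpace.norm_eq, EuclideanSpace.norm_eq]
      apply Real.sqrt_le_sqrt
      rw [Fintype.sum_sum_type]
      simp only [WithLp.equiv_symm_apply, PiLp.toLp_apply]
      exact le_add_of_nonneg_left (Finset.sum_nonneg fun _ _ => by positivity)
  have hball : volume (Metric.ball (0 : E) 1)
      ≤ volume (Metric.ball (0 : E') 1) * volume (Metric.ball (0 : E'') 1) := by
    calc volume (Metric.ball (0 : E) 1)
        ≤ volume (Φ ⁻¹' (Metric.ball 0 1 ×ˢ Metric.ball 0 1)) := measure_mono hsub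
      _ = ((volume : Measure E').prod volume) (Metric.ball 0 1 ×ˢ Metric.ball 0 1) :=
          hmp.measure_preimage (measurableSet_ball.prod measurableSet_ball).nullMeasurableSet
      _ = _ := by rw [Measure.prod_prod]
  have h1 : volume (Metric.ball (0 : E') 1) ≠ ⊤ := measure_ball_lt_top.ne
  have h2 : volume (Metric.ball (0 : E'') 1) ≠ ⊤ := measure_ball_lt_top.ne
  have := ENNReal.toReal_mono (by exact ENNReal.mul_ne_top h1 h2) hball
  rwa [ENNReal.toReal_mul] at this

set_option maxHeartbeats 1000000 in
theorem chi_le_chi_add_chi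
    {E' E E'' : Type*}
    [NormedAddCommGroup E'] [InnerProductSpace ℝ E'] [FiniteDimensional ℝ E']
    [MeasurableSpace E'] [BorelSpace E']
    [NormedAddCommGroup E] [InnerProductSpace ℝ E] [FiniteDimensional ℝ E]
    [MeasurableSpace E] [BorelSpace E]
    [NormedAddCommGroup E''] [InnerProductSpace ℝ E''] [FiniteDimensional ℝ E'']
    [MeasurableSpace E''] [BorelSpace E'']
    (f : E' →ₗᵢ[ℝ] E) (g : E →ₗ[ℝ] E'')
    (hsurj : Function.Surjective g)
    (hexact : LinearMap.ker g = LinearMap.range f.toLinearMap)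
    (hquot : ∀ x ∈ (LinearMap.ker g)ᗮ, ‖g x‖ = ‖x‖)
    (M' : Submodule ℤ E') [DiscreteTopology M'] [IsZLattice ℝ M']
    (M : Submodule ℤ E) [DiscreteTopology M] [IsZLattice ℝ M]
    (M'' : Submodule ℤ E'') [DiscreteTopology M''] [IsZLattice ℝ M'']
    (hM' : M'.map (f.toLinearMap.restrictScalars ℤ) =
      M ⊓ (LinearMap.ker g).restrictScalars ℤ)
    (hM'' : M.map (g.restrictScalars ℤ) = M'') :
    Real.log ((volume (Metric.ball (0 : E) 1)).toReal / ZLattice.covolume M)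
      ≤ Real.log ((volume (Metric.ball (0 : E') 1)).toReal / ZLattice.covolume M')
        + Real.log ((volume (Metric.ball (0 : E'') 1)).toReal / ZLattice.covolume M'') := by
    classical
  set K : Submodule ℝ E := LinearMap.ker g with hK
  set n' := finrank ℝ E' with hn'
  set n'' := finrank ℝ E'' with hn''
  have hfK : ∀ x : E', f x ∈ K := by
    intro x
    show f x ∈ K
    rw [hexact]
    exact ⟨x, rfl⟩
  -- the isometric equivalence E' ≃ K
  let fK : E' →ₗᵢ[ℝ] K :=
    { toLinearMap := (f.toLinearMap).codRestrict K hfK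
      norm_map' := fun x => f.norm_map x }
  have fK_coe : ∀ x : E', (fK x : E) = f x := fun x => rfl
  have fKsurj : Function.Surjective fK := by
    intro y
    have : (y : E) ∈ LinearMap.range f.toLinearMap := by rw [← hexact]; exact y.2
    obtain ⟨x, hx⟩ := this
    exact ⟨x, Subtype.ext hx⟩
  let eK : E' ≃ₗᵢ[ℝ] K := LinearIsometryEquiv.ofSurjective fK fKsurj
  have eK_coe : ∀ x : E', (eK x : E) = f x := fun x => rfl
  -- the isometric equivalence Kᗮ ≃ E''
  let gK : ↥Kᗮ →ₗᵢ[ℝ] E'' :=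
    { toLinearMap := g ∘ₗ Kᗮ.subtype
      norm_map' := fun x => hquot x x.2 }
  have gK_coe : ∀ x : ↥Kᗮ, gK x = g (x : E) := fun x => rfl
  have hgzero : ∀ x : E, x ∈ K → g x = 0 := fun x hx => hx
  have gKsurj : Function.Surjective gK := by
    intro y
    obtain ⟨x, rfl⟩ := hsurj y
    refine ⟨Kᗮ.orthogonalProjectionOnto x, ?_⟩
    have hdec : (K.orthogonalProjectionOnto x : E) + (Kᗮ.orthogonalProjectionOnto x : E) = x :=
      Submodule.starProjection_add_starProjection_orthogonal (K := K) x
    have h1 : ((Kᗮ.orthogonalProjectionOnto x : E)) = x - (K.orthogonalProjectionOnto x : E) :=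
      eq_sub_of_add_eq' hdec
    rw [gK_coe, h1, map_sub, hgzero _ (K.orthogonalProjectionOnto x).2, sub_zero]
  let eG : ↥Kᗮ ≃ₗᵢ[ℝ] E'' := LinearIsometryEquiv.ofSurjective gK gKsurj
  have eG_coe : ∀ x : ↥Kᗮ, eG x = g (x : E) := fun x => rfl
  -- orthonormal bases
  let b' := stdOrthonormalBasis ℝ E'
  let b'' := stdOrthonormalBasis ℝ E''
  let c' := b'.map eK
  let c'' := b''.map eG.symm
  have c'_coe : ∀ i, (c' i : E) = f (b' i) := fun i => by
    show (eK (b' i) : E) = f (b' i)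
    exact eK_coe _
  have c''_g : ∀ j, g (c'' j : E) = b'' j := fun j => by
    have : eG (c'' j) = b'' j := by
      show eG (eG.symm (b'' j)) = b'' j
      exact eG.apply_symm_apply _
    rw [← this, eG_coe]
  let V : Fin n' ⊕ Fin n'' → E := Sum.elim (fun i => (c' i : E)) (fun j => (c'' j : E))
  have hVon : Orthonormal ℝ V := by
    rw [orthonormal_iff_ite]
    have hc' := c'.orthonormal
    have hc'' := c''.orthonormal
    rw [orthonormal_iff_ite] at hc' hc''
    rintro (i | i) (j | j)
    · simpa [V, Sum.elim_inl, Submodule.coe_inner] using hc' i j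
    · exact by
        simpa [V] using Submodule.inner_right_of_mem_orthogonal (c' i).2 (c'' j).2
    · exact by
        simpa [V] using Submodule.inner_left_of_mem_orthogonal (c' j).2 (c'' i).2
    · simpa [V, Submodule.coe_inner] using hc'' i j
  have hVsp : ⊤ ≤ Submodule.span ℝ (Set.range V) := by
    have hrange : Set.range V =
        (K.subtype '' Set.range c') ∪ (Kᗮ.subtype '' Set.range c'') := by
      rw [Set.Sum.elim_range]
      congr 1
      · rw [← Set.range_comp]; rfl
      · rw [← Set.range_comp]; rfl
    rw [hrange, Submodule.span_union, Submodule.span_image, Submodule.span_image]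
    have h1 : Submodule.span ℝ (Set.range ⇑c') = ⊤ := by
      rw [← c'.coe_toBasis]; exact c'.toBasis.span_eq
    have h2 : Submodule.span ℝ (Set.range ⇑c'') = ⊤ := by
      rw [← c''.coe_toBasis]; exact c''.toBasis.span_eq
    rw [h1, h2, Submodule.map_top, Submodule.range_subtype, Submodule.map_top,
      Submodule.range_subtype, Submodule.sup_orthogonal_of_hasOrthogonalProjection]
  let b₀ : OrthonormalBasis (Fin n' ⊕ Fin n'') ℝ E := OrthonormalBasis.mk hVon hVsp
  have hb₀ : ∀ k, b₀ k = V k := fun k => by rw [OrthonormalBasis.coe_mk]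
  -- ℤ-bases
  have card' : Fintype.card (Module.Free.ChooseBasisIndex ℤ ↥M') = n' := by
    rw [← Module.finrank_eq_card_chooseBasisIndex, ZLattice.rank ℝ M']
  have card'' : Fintype.card (Module.Free.ChooseBasisIndex ℤ ↥M'') = n'' := by
    rw [← Module.finrank_eq_card_chooseBasisIndex, ZLattice.rank ℝ M'']
  let β' : Basis (Fin n') ℤ ↥M' :=
    (Module.Free.chooseBasis ℤ ↥M').reindex (Fintype.equivFinOfCardEq card')
  let β'' : Basis (Fin n'') ℤ ↥M'' :=
    (Module.Free.chooseBasis ℤ ↥M'').reindex (Fintype.equivFinOfCardEq card'')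
  have hlift : ∀ j : Fin n'', ∃ m : ↥M, g (m : E) = (β'' j : E'') := by
    intro j
    have h : (β'' j : E'') ∈ M.map (g.restrictScalars ℤ) := by
      rw [hM'']; exact (β'' j).2
    obtain ⟨x, hxM, hx⟩ := h
    exact ⟨⟨x, hxM⟩, hx⟩
  choose t ht using hlift
  have hfmem : ∀ i : Fin n', f (β' i : E') ∈ M := by
    intro i
    have h : f (β' i : E') ∈ M'.map (f.toLinearMap.restrictScalars ℤ) :=
      ⟨(β' i : E'), (β' i).2, rfl⟩
    rw [hM'] at h
    exact h.1
  let W : Fin n' ⊕ Fin n'' → ↥M := Sum.elim (fun i => ⟨f (β' i : E'), hfmem i⟩) t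
  have hWl : ∀ i, ((W (Sum.inl i) : ↥M) : E) = f (β' i : E') := fun i => rfl
  have hWr : ∀ j, ((W (Sum.inr j) : ↥M) : E) = (t j : E) := fun j => rfl
  have hgf : ∀ x : E', g (f x) = 0 := fun x => hgzero _ (hfK x)
  have hli'' : LinearIndependent ℤ (fun j => (β'' j : E'')) :=
    β''.linearIndependent.map' M''.subtype (Submodule.ker_subtype M'')
  have hli' : LinearIndependent ℤ (fun i => (β' i : E')) :=
    β'.linearIndependent.map' M'.subtype (Submodule.ker_subtype M')
  have hWli : LinearIndependent ℤ W := by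
    rw [Fintype.linearIndependent_iff]
    intro a ha
    have haE : ∑ k, a k • (W k : E) = 0 := by
      have h := congrArg (M.subtype) ha
      simpa using h
    have hg2 : ∑ j, a (Sum.inr j) • (β'' j : E'') = 0 := by
      have h := congrArg g haE
      rw [map_sum, map_zero, Fintype.sum_sum_type] at h
      simp only [map_zsmul, hWl, hWr, hgf, smul_zero, Finset.sum_const_zero, zero_add, ht] at h
      exact h
    have hz'' : ∀ j, a (Sum.inr j) = 0 := Fintype.linearIndependent_iff.mp hli'' _ hg2
    have hf0 : ∑ i, a (Sum.inl i) • (β' i : E') = 0 := by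
      apply f.injective
      rw [map_sum, map_zero]
      simp only [map_zsmul]
      have := haE
      rw [Fintype.sum_sum_type] at this
      simp only [hWl, hWr] at this
      simpa only [hz'', zero_smul, Finset.sum_const_zero, add_zero] using this
    have hz' : ∀ i, a (Sum.inl i) = 0 := Fintype.linearIndependent_iff.mp hli' _ hf0
    rintro (i | j)
    exacts [hz' i, hz'' j]
  have hWsp : ⊤ ≤ Submodule.span ℤ (Set.range W) := by
    rintro m -
    have hymem : g (m : E) ∈ M'' := by
      rw [← hM'']; exact ⟨(m : E), m.2, rfl⟩
    set y : ↥M'' := ⟨g (m : E), hymem⟩ with hy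
    set m₂ : ↥M := ∑ j, β''.repr y j • t j with hm₂
    have hgm₂ : g (m₂ : E) = g (m : E) := by
      have hcoe : (m₂ : E) = ∑ j, β''.repr y j • (t j : E) := by
        rw [hm₂]; push_cast; rfl
      rw [hcoe, map_sum]
      simp only [map_zsmul, ht]
      calc ∑ j, β''.repr y j • (β'' j : E'')
          = ((∑ j, β''.repr y j • β'' j : ↥M'') : E'') := by push_cast; rfl
        _ = (y : E'') := by rw [β''.sum_repr]
        _ = g (m : E) := rfl
    have hker : ((m - m₂ : ↥M) : E) ∈ M'.map (f.toLinearMap.restrictScalars ℤ) := by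
      rw [hM']
      refine ⟨(m - m₂).2, ?_⟩
      show g ((m - m₂ : ↥M) : E) = 0
      rw [Submodule.coe_sub, map_sub, hgm₂, sub_self]
    obtain ⟨aa, haM', hfa⟩ := hker
    set z : ↥M' := ⟨aa, haM'⟩ with hz
    have hfz : f (z : E') = (m : E) - (m₂ : E) := by
      rw [show f (z : E') = ((m - m₂ : ↥M) : E) from hfa, Submodule.coe_sub]
    have hm : m = ∑ i, β'.repr z i • W (Sum.inl i) + ∑ j, β''.repr y j • W (Sum.inr j) := by
      apply Subtype.ext
      have h1 : ((∑ i, β'.repr z i • W (Sum.inl i) : ↥M) : E) = f (z : E') := by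
        have hc : ((∑ i, β'.repr z i • W (Sum.inl i) : ↥M) : E)
            = ∑ i, β'.repr z i • ((W (Sum.inl i) : ↥M) : E) := by push_cast; rfl
        rw [hc]
        simp only [hWl]
        calc ∑ i, β'.repr z i • f (β' i : E')
            = f (∑ i, β'.repr z i • (β' i : E')) := by
              rw [map_sum]; simp only [map_zsmul]
          _ = f (((∑ i, β'.repr z i • β' i : ↥M') : E')) := by push_cast; rfl
          _ = f (z : E') := by rw [β'.sum_repr]
      have h2 : ((∑ j, β''.repr y j • W (Sum.inr j) : ↥M) : E) = (m₂ : E) := rfl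
      rw [Submodule.coe_add, h1, h2, hfz, sub_add_cancel]
    rw [hm]
    exact Submodule.add_mem _
      (Submodule.sum_mem _ fun i _ => Submodule.smul_mem _ _
        (Submodule.subset_span ⟨Sum.inl i, rfl⟩))
      (Submodule.sum_mem _ fun j _ => Submodule.smul_mem _ _
        (Submodule.subset_span ⟨Sum.inr j, rfl⟩))
  let bM : Basis (Fin n' ⊕ Fin n'') ℤ ↥M := Basis.mk hWli hWsp
  have hbM : ∀ k, bM k = W k := fun k => by rw [Basis.coe_mk]
  -- covolume additivity
  have hb₀l : ∀ i, b₀ (Sum.inl i) = f (b' i) := fun i => by rw [hb₀]; exact c'_coe i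
  have hb₀r : ∀ j, b₀ (Sum.inr j) = (c'' j : E) := fun j => by rw [hb₀]; rfl
  have hbMl : ∀ i, ((bM (Sum.inl i) : ↥M) : E) = f (β' i : E') := fun i => by
    rw [hbM]; exact hWl i
  have hbMr : ∀ j, ((bM (Sum.inr j) : ↥M) : E) = (t j : E) := fun j => by
    rw [hbM]; exact hWr j
  have hcovol : ZLattice.covolume M = ZLattice.covolume M' * ZLattice.covolume M'' := by
    have hA : ZLattice.covolume M' = |b'.toBasis.det ((↑) ∘ ⇑β')| := covolume_eq_abs_det M' β' b'
    have hD : ZLattice.covolume M'' = |b''.toBasis.det ((↑) ∘ ⇑β'')| :=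
      covolume_eq_abs_det M'' β'' b''
    have hM0 : ZLattice.covolume M = |b₀.toBasis.det ((↑) ∘ ⇑bM)| := covolume_eq_abs_det M bM b₀
    have hmat : b₀.toBasis.toMatrix ((↑) ∘ ⇑bM) =
        Matrix.fromBlocks (b'.toBasis.toMatrix ((↑) ∘ ⇑β'))
          (Matrix.of fun i j => (inner ℝ (b₀ (Sum.inl i)) ((t j : E)) : ℝ)) 0
          (b''.toBasis.toMatrix ((↑) ∘ ⇑β'')) := by
      ext k l
      rw [Basis.toMatrix_apply, b₀.coe_toBasis_repr_apply, b₀.repr_apply_apply]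
      match k, l with
      | Sum.inl i, Sum.inl i' =>
        rw [Matrix.fromBlocks_apply₁₁, Basis.toMatrix_apply, b'.coe_toBasis_repr_apply,
          b'.repr_apply_apply]
        show (inner ℝ (b₀ (Sum.inl i)) (((bM (Sum.inl i') : ↥M) : E)) : ℝ) = _
        rw [hb₀l, hbMl, f.inner_map_map]; rfl
      | Sum.inl i, Sum.inr j =>
        rw [Matrix.fromBlocks_apply₁₂, Matrix.of_apply]
        show (inner ℝ (b₀ (Sum.inl i)) (((bM (Sum.inr j) : ↥M) : E)) : ℝ) = _
        rw [hbMr]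
      | Sum.inr j, Sum.inl i' =>
        rw [Matrix.fromBlocks_apply₂₁, Matrix.zero_apply]
        show (inner ℝ (b₀ (Sum.inr j)) (((bM (Sum.inl i') : ↥M) : E)) : ℝ) = 0
        rw [hb₀r, hbMl]
        exact Submodule.inner_left_of_mem_orthogonal (hfK _) (c'' j).2
      | Sum.inr j, Sum.inr j' =>
        rw [Matrix.fromBlocks_apply₂₂, Basis.toMatrix_apply, b''.coe_toBasis_repr_apply,
          b''.repr_apply_apply]
        show (inner ℝ (b₀ (Sum.inr j)) (((bM (Sum.inr j') : ↥M) : E)) : ℝ) = _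
        rw [hb₀r, hbMr]
        have hdec : (K.orthogonalProjectionOnto (t j' : E) : E)
            + (Kᗮ.orthogonalProjectionOnto (t j' : E) : E) = (t j' : E) :=
          Submodule.starProjection_add_starProjection_orthogonal (K := K) ((t j' : E))
        have hsplit : (inner ℝ ((c'' j : E)) ((t j' : E)) : ℝ)
            = inner ℝ ((c'' j : E)) ((Kᗮ.orthogonalProjectionOnto (t j' : E) : E)) := by
          conv_lhs => rw [← hdec]
          rw [inner_add_right,
            Submodule.inner_left_of_mem_orthogonal (K.orthogonalProjectionOnto (t j' : E)).2
              (c'' j).2, zero_add]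
        rw [hsplit]
        have h1 : (inner ℝ ((c'' j : E)) ((Kᗮ.orthogonalProjectionOnto (t j' : E) : E)) : ℝ)
            = inner ℝ (gK (c'' j)) (gK (Kᗮ.orthogonalProjectionOnto (t j' : E))) := by
          rw [gK.inner_map_map]; rfl
        have h2 : gK (c'' j) = b'' j := by rw [gK_coe]; exact c''_g j
        have h3 : gK (Kᗮ.orthogonalProjectionOnto (t j' : E)) = (β'' j' : E'') := by
          rw [gK_coe]
          have h1' : ((Kᗮ.orthogonalProjectionOnto (t j' : E) : E))
              = (t j' : E) - (K.orthogonalProjectionOnto (t j' : E) : E) := eq_sub_of_add_eq' hdec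
          rw [h1', map_sub, ht, hgzero _ (K.orthogonalProjectionOnto (t j' : E)).2, sub_zero]
        rw [h1, h2, h3]; rfl
    rw [hM0, hA, hD, Basis.det_apply, Basis.det_apply, Basis.det_apply, hmat,
      Matrix.det_fromBlocks_zero₂₁, abs_mul]
  -- volume inequality
  have hvol := vol_ball_le_mul b₀ b' b''
  -- positivity & conclusion
  have hv : 0 < (volume (Metric.ball (0 : E) 1)).toReal :=
    ENNReal.toReal_pos (Metric.measure_ball_pos volume 0 one_pos).ne' measure_ball_lt_top.ne
  have hv' : 0 < (volume (Metric.ball (0 : E') 1)).toReal :=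
    ENNReal.toReal_pos (Metric.measure_ball_pos volume 0 one_pos).ne' measure_ball_lt_top.ne
  have hv'' : 0 < (volume (Metric.ball (0 : E'') 1)).toReal :=
    ENNReal.toReal_pos (Metric.measure_ball_pos volume 0 one_pos).ne' measure_ball_lt_top.ne
  have hc' : 0 < ZLattice.covolume M' := ZLattice.covolume_pos M' volume
  have hc'' : 0 < ZLattice.covolume M'' := ZLattice.covolume_pos M'' volume
  rw [hcovol]
  have key : (volume (Metric.ball (0 : E) 1)).toReal
        / (ZLattice.covolume M' * ZLattice.covolume M'')
      ≤ ((volume (Metric.ball (0 : E') 1)).toReal / ZLattice.covolume M')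
        * ((volume (Metric.ball (0 : E'') 1)).toReal / ZLattice.covolume M'') := by
    rw [div_mul_div_comm]
    exact div_le_div₀ (by positivity) hvol (by positivity) le_rfl
  calc Real.log ((volume (Metric.ball (0 : E) 1)).toReal
        / (ZLattice.covolume M' * ZLattice.covolume M''))
      ≤ Real.log (((volume (Metric.ball (0 : E') 1)).toReal / ZLattice.covolume M')
        * ((volume (Metric.ball (0 : E'') 1)).toReal / ZLattice.covolume M'')) := by
        apply Real.log_le_log (by positivity) key
    _ = _ := Real.log_mul (by positivity) (by positivity)
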